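/- Let N be a positive integer and let m, σ, t, t′ be integers such that N divides σ² − m and N divides t·t′ − 1. Suppose s is an integer with 0 ≤ s, s² < N, and N divides s − σ·t. Then s² is equal to the least nonnegative residue of m·t² modulo N, and N divides σ − s·t′. -/
import Mathlib


/-- Correctness of decompression of Bleichenbacher-compressed Rabin
signatures: if `σ² ≡ m (mod N)`, `t·t′ ≡ 1 (mod N)`, and `s ≡ σ·t (mod N)`
with `0 ≤ s` and `s² < N`, then `s²` equals the least nonnegative residue of
`m·t²` modulo `N`, and `σ ≡ s·t′ (mod N)`. -/
theorem rabin_decompression (N m σ t t' s : ℤ) (hN : 0 < N)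
    (hsig : N ∣ σ ^ 2 - m) (hinv : N ∣ t * t' - 1)
    (hs0 : 0 ≤ s) (hs2 : s ^ 2 < N) (hst : N ∣ s - σ * t) :
    s ^ 2 = (m * t ^ 2) % N ∧ N ∣ σ - s * t' := by
  have h1 : N ∣ s ^ 2 - m * t ^ 2 := by
    obtain ⟨a, ha⟩ := hsig
    obtain ⟨c, hc⟩ := hst
    have hs : s = σ * t + N * c := by linarith
    have hm : m = σ ^ 2 - N * a := by linarith
    refine ⟨2 * σ * t * c + N * c ^ 2 + a * t ^ 2, ?_⟩
    subst hs hm; ring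
  constructor
  · have h2 : s ^ 2 % N = (m * t ^ 2) % N :=
      Int.modEq_iff_dvd.mpr (by simpa using dvd_neg.mpr h1 : N ∣ m * t ^ 2 - s ^ 2)
    rw [← h2, Int.emod_eq_of_lt (by positivity) hs2]
  · obtain ⟨a, ha⟩ := hinv
    obtain ⟨c, hc⟩ := hst
    exact ⟨-σ * a - c * t', by linear_combination (-t') * hc + (-σ) * ha⟩
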